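/- arXiv:1209.5711 — 11 statements merged into one kernel-verified Lean document; each statement's English description precedes it below -/
import Mathlib

section
/- For x = (x1, x2, x3) in C^3, if |x1 - conj(x2)·x3| + |x2 - conj(x1)·x3| + |x3|^2 < 1, then |x1| < 1 and |x2| < 1 (i.e. the tetrablock is contained in the unit polydisc D^3). -/
open Complex

theorem tetrablock_subset_polydisc (x₁ x₂ x₃ : ℂ)
    (h : ‖x₁ - (starRingEnd ℂ) x₂ * x₃‖ +
         ‖x₂ - (starRingEnd ℂ) x₁ * x₃‖ +
         (‖x₃‖) ^ 2 < 1) :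
    ‖x₁‖ < 1 ∧ ‖x₂‖ < 1 := by
  have hA : ‖x₁‖ ≤ ‖x₁ - (starRingEnd ℂ) x₂ * x₃‖ +
      ‖x₂‖ * ‖x₃‖ := by
    have := norm_add_le (x₁ - (starRingEnd ℂ) x₂ * x₃) ((starRingEnd ℂ) x₂ * x₃)
    simpa [norm_mul, Complex.norm_conj] using this
  have hB : ‖x₂‖ ≤ ‖x₂ - (starRingEnd ℂ) x₁ * x₃‖ +
      ‖x₁‖ * ‖x₃‖ := by
    have := norm_add_le (x₂ - (starRingEnd ℂ) x₁ * x₃) ((starRingEnd ℂ) x₁ * x₃)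
    simpa [norm_mul, Complex.norm_conj] using this
  have hAnn : 0 ≤ ‖x₁ - (starRingEnd ℂ) x₂ * x₃‖ := norm_nonneg _
  have hBnn : 0 ≤ ‖x₂ - (starRingEnd ℂ) x₁ * x₃‖ := norm_nonneg _
  have ht : 0 ≤ ‖x₃‖ := norm_nonneg _
  have ht1 : ‖x₃‖ < 1 := by nlinarith
  constructor
  · nlinarith [norm_nonneg x₁, norm_nonneg x₂]
  · nlinarith [norm_nonneg x₁, norm_nonneg x₂]
end

section
/- For any x ∈ C^3 there exists ω ∈ C with |ω| = 1 such that |x1 + ω·x2 - conj(x1 + ω·x2)·ω·x3| = |x1 - conj(x2)·x3| + |x2 - conj(x1)·x3|. -/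
open Complex

theorem tetrablock_key_equality (x₁ x₂ x₃ : ℂ) :
    ∃ ω : ℂ, ‖ω‖ = 1 ∧
      ‖x₁ + ω * x₂ - (starRingEnd ℂ) (x₁ + ω * x₂) * (ω * x₃)‖ =
        ‖x₁ - (starRingEnd ℂ) x₂ * x₃‖ +
        ‖x₂ - (starRingEnd ℂ) x₁ * x₃‖ := by
  set A := x₁ - (starRingEnd ℂ) x₂ * x₃ with hA
  set B := x₂ - (starRingEnd ℂ) x₁ * x₃ with hB
  have key : ∀ ω : ℂ, ‖ω‖ = 1 →
      x₁ + ω * x₂ - (starRingEnd ℂ) (x₁ + ω * x₂) * (ω * x₃) = A + ω * B := by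
    intro ω hω
    have h1 : (starRingEnd ℂ) ω * ω = 1 := by
      rw [mul_comm, Complex.mul_conj]
      norm_cast
      rw [← Complex.sq_norm, hω]; norm_num
    rw [hA, hB, map_add, map_mul]
    linear_combination (-(starRingEnd ℂ) x₂ * x₃) * h1
  by_cases hAB : A = 0 ∨ B = 0
  · refine ⟨1, by simp, ?_⟩
    rw [key 1 (by simp)]
    rcases hAB with h | h <;> simp [h]
  · push_neg at hAB
    obtain ⟨hA0, hB0⟩ := hAB
    have hAa : (‖A‖ : ℝ) ≠ 0 := norm_ne_zero_iff.mpr hA0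
    have hBa : (‖B‖ : ℝ) ≠ 0 := norm_ne_zero_iff.mpr hB0
    have hAc : ((‖A‖ : ℝ) : ℂ) ≠ 0 := by exact_mod_cast hAa
    have hBc : ((‖B‖ : ℝ) : ℂ) ≠ 0 := by exact_mod_cast hBa
    refine ⟨A * (starRingEnd ℂ) B / ((‖A‖ : ℂ) * (‖B‖ : ℂ)), ?_, ?_⟩
    · rw [norm_div, norm_mul, norm_mul, Complex.norm_conj, Complex.norm_real,
        Complex.norm_real, Real.norm_of_nonneg (norm_nonneg A),
        Real.norm_of_nonneg (norm_nonneg B)]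
      field_simp
    · rw [key _ ?hone]
      case hone =>
        rw [norm_div, norm_mul, norm_mul, Complex.norm_conj, Complex.norm_real,
          Complex.norm_real, Real.norm_of_nonneg (norm_nonneg A),
          Real.norm_of_nonneg (norm_nonneg B)]
        field_simp
      have hBB : (starRingEnd ℂ) B * B = ((‖B‖ : ℂ)) ^ 2 := by
        rw [mul_comm, Complex.mul_conj, Complex.normSq_eq_norm_sq]
        norm_cast
      have : A + A * (starRingEnd ℂ) B / ((‖A‖ : ℂ) * (‖B‖ : ℂ)) * B
          = A * (((‖A‖ : ℂ) + (‖B‖ : ℂ)) / (‖A‖ : ℂ)) := by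
        field_simp [hAc, hBc]
        linear_combination hBB
      rw [this, norm_mul, norm_div]
      have habs : ‖((‖A‖ : ℂ) + (‖B‖ : ℂ))‖ =
          ‖A‖ + ‖B‖ := by
        norm_cast
        exact _root_.abs_of_nonneg (by positivity)
      rw [habs, Complex.norm_real, Real.norm_of_nonneg (norm_nonneg A)]
      field_simp
end

section
/- For x ∈ C^3, the following are equivalent: (1) x ∈ E; (2) for every ω ∈ C with |ω| = 1, (x1 + ω·x2, ω·x3) ∈ G2; (3) for every ω ∈ C with |ω| ≤ 1, (x1 + ω·x2, ω·x3) ∈ G2. -/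
open Complex

lemma key_ineq (A B C X1 X2 r : ℝ) (hA : 0 ≤ A) (hB : 0 ≤ B) (hC : 0 ≤ C)
    (hr0 : 0 ≤ r) (hr1 : r ≤ 1)
    (hE : A + B + C^2 < 1) (h1 : X1 ≤ A + X2*C) (h2 : X2 ≤ B + X1*C) :
    A + r*B + (1 - r^2)*(X2*C) + r^2*C^2 < 1 := by
  have hC1 : C < 1 := by nlinarith
  have hCC : (0:ℝ) < 1 - C^2 := by nlinarith
  have hX2' : X2*(1-C^2) ≤ B + A*C := by nlinarith
  have hr2 : (0:ℝ) ≤ 1 - r^2 := by nlinarith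
  have h4 : (1-r^2)*C*(X2*(1-C^2)) ≤ (1-r^2)*C*(B+A*C) :=
    mul_le_mul_of_nonneg_left hX2' (mul_nonneg hr2 hC)
  have p1 : (0:ℝ) ≤ (1-r)*B*((1-C)*(1-r*C)) := by
    apply mul_nonneg (mul_nonneg (by linarith) hB)
    apply mul_nonneg (by linarith)
    nlinarith
  have p2 : (0:ℝ) ≤ (1-r^2)*C^2*((1 - B - C^2) - A) := by
    apply mul_nonneg (mul_nonneg hr2 (sq_nonneg C)); linarith
  have h5 : (1-r^2)*C*(B+A*C) ≤ ((1-r)*B + (1-r^2)*C^2)*(1-C^2) := by nlinarith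
  have h3 : (1 - r^2)*(X2*C) ≤ (1-r)*B + (1-r^2)*C^2 := by
    rw [← mul_le_mul_iff_of_pos_right hCC]; nlinarith
  linarith

lemma exists_align (a b : ℂ) :
    ∃ ω : ℂ, ‖ω‖ = 1 ∧ ‖a‖ + ‖b‖ ≤ ‖a + ω * b‖ := by
  by_cases hb : b = 0
  · exact ⟨1, by simp, by simp [hb]⟩
  by_cases ha : a = 0
  · exact ⟨1, by simp, by simp [ha]⟩
  have ha' : ‖a‖ ≠ 0 := norm_ne_zero_iff.mpr ha
  have hb' : ‖b‖ ≠ 0 := norm_ne_zero_iff.mpr hb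
  have hbb : (starRingEnd ℂ) b * b = ((‖b‖ ^ 2 : ℝ) : ℂ) := by
    rw [mul_comm, Complex.mul_conj, Complex.normSq_eq_norm_sq]
  refine ⟨(a / (‖a‖ : ℂ)) * ((starRingEnd ℂ) b / (‖b‖ : ℂ)), ?_, ?_⟩
  · rw [norm_mul, norm_div, norm_div, Complex.norm_conj, Complex.norm_real, Real.norm_eq_abs, Complex.norm_real, Real.norm_eq_abs,
      _root_.abs_of_nonneg (norm_nonneg a), _root_.abs_of_nonneg (norm_nonneg b)]
    field_simp
  · have h1 : (a / (‖a‖ : ℂ)) * ((starRingEnd ℂ) b / (‖b‖ : ℂ)) * b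
        = a * ((‖b‖ / ‖a‖ : ℝ) : ℂ) := by
      have hac : ((‖a‖ : ℝ) : ℂ) ≠ 0 := by exact_mod_cast ha'
      have hbc : ((‖b‖ : ℝ) : ℂ) ≠ 0 := by exact_mod_cast hb'
      rw [div_mul_div_comm, div_mul_eq_mul_div, mul_assoc, hbb]
      push_cast
      field_simp
    rw [h1]
    have h2 : a + a * ((‖b‖ / ‖a‖ : ℝ) : ℂ)
        = a * ((1 + ‖b‖ / ‖a‖ : ℝ) : ℂ) := by push_cast; ring
    rw [h2, norm_mul, Complex.norm_real, Real.norm_eq_abs,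
      _root_.abs_of_nonneg (by positivity : (0:ℝ) ≤ 1 + ‖b‖ / ‖a‖)]
    rw [mul_add, mul_one, mul_div_cancel₀ _ ha']

/-- The tetrablock. -/
def tetrablockE : Set (ℂ × ℂ × ℂ) :=
  {x | ‖x.1 - (starRingEnd ℂ) x.2.1 * x.2.2‖ +
       ‖x.2.1 - (starRingEnd ℂ) x.1 * x.2.2‖ +
       (‖x.2.2‖) ^ 2 < 1}

/-- The symmetrized bidisc. -/
def symBidisc : Set (ℂ × ℂ) :=
  {p | ‖p.1 - (starRingEnd ℂ) p.1 * p.2‖ + (‖p.2‖) ^ 2 < 1}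

theorem tetrablock_tfae (x : ℂ × ℂ × ℂ) :
    (x ∈ tetrablockE ↔
      ∀ ω : ℂ, ‖ω‖ = 1 → (x.1 + ω * x.2.1, ω * x.2.2) ∈ symBidisc) ∧
    (x ∈ tetrablockE ↔
      ∀ ω : ℂ, ‖ω‖ ≤ 1 → (x.1 + ω * x.2.1, ω * x.2.2) ∈ symBidisc) := by
  set a : ℂ := x.1 - (starRingEnd ℂ) x.2.1 * x.2.2 with ha_def
  set b : ℂ := x.2.1 - (starRingEnd ℂ) x.1 * x.2.2 with hb_def
  -- key algebraic identity
  have hid : ∀ ω : ℂ,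
      (x.1 + ω * x.2.1) - (starRingEnd ℂ) (x.1 + ω * x.2.1) * (ω * x.2.2)
        = a + ω * b + (1 - ((‖ω‖ ^ 2 : ℝ) : ℂ)) * ((starRingEnd ℂ) x.2.1 * x.2.2) := by
    intro ω
    have hωω : ω * (starRingEnd ℂ) ω = ((‖ω‖ ^ 2 : ℝ) : ℂ) := by
      rw [Complex.mul_conj, Complex.normSq_eq_norm_sq]
    rw [ha_def, hb_def, map_add, map_mul, ← hωω]
    ring
  -- norm bounds relating |x1|, |x2| to |a|, |b|
  have hx1 : ‖x.1‖ ≤ ‖a‖ + ‖x.2.1‖ * ‖x.2.2‖ := by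
    calc ‖x.1‖ = ‖a + (starRingEnd ℂ) x.2.1 * x.2.2‖ := by
          rw [ha_def, sub_add_cancel]
      _ ≤ ‖a‖ + ‖(starRingEnd ℂ) x.2.1 * x.2.2‖ := norm_add_le _ _
      _ = ‖a‖ + ‖x.2.1‖ * ‖x.2.2‖ := by
          rw [norm_mul, Complex.norm_conj]
  have hx2 : ‖x.2.1‖ ≤ ‖b‖ + ‖x.1‖ * ‖x.2.2‖ := by
    calc ‖x.2.1‖ = ‖b + (starRingEnd ℂ) x.1 * x.2.2‖ := by
          rw [hb_def, sub_add_cancel]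
      _ ≤ ‖b‖ + ‖(starRingEnd ℂ) x.1 * x.2.2‖ := norm_add_le _ _
      _ = ‖b‖ + ‖x.1‖ * ‖x.2.2‖ := by
          rw [norm_mul, Complex.norm_conj]
  -- E implies the closed-disc condition
  have hE3 : x ∈ tetrablockE → ∀ ω : ℂ, ‖ω‖ ≤ 1 →
      (x.1 + ω * x.2.1, ω * x.2.2) ∈ symBidisc := by
    intro hx ω hω
    have hxE : ‖a‖ + ‖b‖ + (‖x.2.2‖)^2 < 1 := hx
    simp only [symBidisc, Set.mem_setOf_eq]
    have hb1 : ‖(x.1 + ω * x.2.1) - (starRingEnd ℂ) (x.1 + ω * x.2.1) * (ω * x.2.2)‖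
        ≤ ‖a‖ + ‖ω‖ * ‖b‖
          + (1 - ‖ω‖ ^ 2) * (‖x.2.1‖ * ‖x.2.2‖) := by
      rw [hid ω]
      calc ‖a + ω * b + (1 - ((‖ω‖ ^ 2 : ℝ) : ℂ)) * ((starRingEnd ℂ) x.2.1 * x.2.2)‖
          ≤ ‖a + ω * b‖
            + ‖(1 - ((‖ω‖ ^ 2 : ℝ) : ℂ)) * ((starRingEnd ℂ) x.2.1 * x.2.2)‖ :=
            norm_add_le _ _
        _ ≤ (‖a‖ + ‖ω‖ * ‖b‖)
            + ‖1 - ((‖ω‖ ^ 2 : ℝ) : ℂ)‖ * (‖x.2.1‖ * ‖x.2.2‖) := by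
            gcongr
            · calc ‖a + ω * b‖ ≤ ‖a‖ + ‖ω * b‖ :=
                  norm_add_le _ _
                _ = ‖a‖ + ‖ω‖ * ‖b‖ := by rw [norm_mul]
            · rw [norm_mul, norm_mul, Complex.norm_conj]
        _ = ‖a‖ + ‖ω‖ * ‖b‖
            + (1 - ‖ω‖ ^ 2) * (‖x.2.1‖ * ‖x.2.2‖) := by
            have : ‖1 - ((‖ω‖ ^ 2 : ℝ) : ℂ)‖ = 1 - ‖ω‖ ^ 2 := by
              rw [show (1 : ℂ) - ((‖ω‖ ^ 2 : ℝ) : ℂ) = (((1 - ‖ω‖ ^ 2 : ℝ)) : ℂ) by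
                push_cast; ring, Complex.norm_real, Real.norm_eq_abs]
              exact _root_.abs_of_nonneg (by nlinarith [norm_nonneg ω])
            rw [this]
    have hp : (‖ω * x.2.2‖)^2 = ‖ω‖ ^2 * ‖x.2.2‖ ^2 := by
      rw [norm_mul, mul_pow]
    have hk := key_ineq (‖a‖) (‖b‖) (‖x.2.2‖)
      (‖x.1‖) (‖x.2.1‖) (‖ω‖)
      (norm_nonneg a) (norm_nonneg b) (norm_nonneg x.2.2)
      (norm_nonneg ω) hω hxE hx1 hx2
    rw [hp]
    calc ‖(x.1 + ω * x.2.1) - (starRingEnd ℂ) (x.1 + ω * x.2.1) * (ω * x.2.2)‖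
          + ‖ω‖ ^2 * ‖x.2.2‖ ^2
        ≤ (‖a‖ + ‖ω‖ * ‖b‖
          + (1 - ‖ω‖ ^ 2) * (‖x.2.1‖ * ‖x.2.2‖))
          + ‖ω‖ ^2 * ‖x.2.2‖ ^2 := by linarith
      _ < 1 := by nlinarith [hk]
  -- circle condition implies E
  have h2E : (∀ ω : ℂ, ‖ω‖ = 1 → (x.1 + ω * x.2.1, ω * x.2.2) ∈ symBidisc)
      → x ∈ tetrablockE := by
    intro h
    obtain ⟨ω, hω1, hωle⟩ := exists_align a b
    have hmem := h ω hω1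
    simp only [symBidisc, Set.mem_setOf_eq] at hmem
    rw [hid ω, hω1] at hmem
    norm_num at hmem
    rw [hω1, one_mul] at hmem
    show ‖a‖ + ‖b‖ + (‖x.2.2‖)^2 < 1
    linarith
  exact ⟨⟨fun h ω hω => hE3 h ω hω.le, h2E⟩,
    ⟨hE3, fun h => h2E fun ω hω => h ω hω.le⟩⟩
end

section
/- If x ∈ E then for every ω with |ω| ≤ 1, (x1 + ω·x2, ω·x3) ∈ G2. -/
open Complex

set_option maxHeartbeats 1000000 in
theorem tetrablock_to_symBidisc (x : ℂ × ℂ × ℂ) (hx : x ∈ tetrablockE)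
    (ω : ℂ) (hω : ‖ω‖ ≤ 1) :
    (x.1 + ω * x.2.1, ω * x.2.2) ∈ symBidisc := by
  obtain ⟨x1, x2, x3⟩ := x
  simp only [tetrablockE, Set.mem_setOf_eq] at hx
  simp only [symBidisc, Set.mem_setOf_eq]
  set a := ‖x1 - (starRingEnd ℂ) x2 * x3‖ with ha
  set b := ‖x2 - (starRingEnd ℂ) x1 * x3‖ with hb
  set c := ‖x3‖ with hc
  set t := ‖ω‖ with ht
  set X1 := ‖x1‖ with hX1
  set X2 := ‖x2‖ with hX2
  have ha0 : 0 ≤ a := norm_nonneg _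
  have hb0 : 0 ≤ b := norm_nonneg _
  have hc0 : 0 ≤ c := norm_nonneg _
  have ht0 : 0 ≤ t := norm_nonneg _
  have hX10 : 0 ≤ X1 := norm_nonneg _
  have hX20 : 0 ≤ X2 := norm_nonneg _
  -- identity
  have hid : (x1 + ω * x2) - (starRingEnd ℂ) (x1 + ω * x2) * (ω * x3) =
      (x1 - (starRingEnd ℂ) x2 * x3) + ω * (x2 - (starRingEnd ℂ) x1 * x3)
      + (1 - ω * (starRingEnd ℂ) ω) * ((starRingEnd ℂ) x2 * x3) := by
    simp only [map_add, map_mul]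
    ring
  have hωc : ‖1 - ω * (starRingEnd ℂ) ω‖ = 1 - t^2 := by
    have : ω * (starRingEnd ℂ) ω = ((t^2 : ℝ) : ℂ) := by
      rw [Complex.mul_conj, ht, Complex.sq_norm]
    rw [this]
    rw [show (1 : ℂ) - ((t^2 : ℝ) : ℂ) = (((1 - t^2 : ℝ)) : ℂ) by push_cast; ring]
    rw [Complex.norm_real, Real.norm_eq_abs]
    exact abs_of_nonneg (by nlinarith)
  have h1 : ‖(x1 + ω * x2) - (starRingEnd ℂ) (x1 + ω * x2) * (ω * x3)‖
      ≤ a + t * b + (1 - t^2) * (X2 * c) := by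
    rw [hid]
    refine le_trans (norm_add_le _ _) ?_
    have := norm_add_le (x1 - (starRingEnd ℂ) x2 * x3)
      (ω * (x2 - (starRingEnd ℂ) x1 * x3))
    have e1 : ‖ω * (x2 - (starRingEnd ℂ) x1 * x3)‖ = t * b := by
      rw [norm_mul]
    have e2 : ‖(1 - ω * (starRingEnd ℂ) ω) * ((starRingEnd ℂ) x2 * x3)‖
        = (1 - t^2) * (X2 * c) := by
      rw [norm_mul, norm_mul, hωc, Complex.norm_conj]
    rw [e2]
    gcongr
    calc ‖_‖ ≤ a + ‖ω * (x2 - (starRingEnd ℂ) x1 * x3)‖ := this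
    _ = a + t * b := by rw [e1]
  have hX1b : X1 ≤ a + X2 * c := by
    calc X1 = ‖(x1 - (starRingEnd ℂ) x2 * x3) + (starRingEnd ℂ) x2 * x3‖ := by
          ring_nf; exact hX1
    _ ≤ a + X2 * c := by
          refine le_trans (norm_add_le _ _) ?_
          rw [norm_mul, Complex.norm_conj]
    -- done
  have hX2b : X2 ≤ b + X1 * c := by
    calc X2 = ‖(x2 - (starRingEnd ℂ) x1 * x3) + (starRingEnd ℂ) x1 * x3‖ := by
          ring_nf; exact hX2
    _ ≤ b + X1 * c := by
          refine le_trans (norm_add_le _ _) ?_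
          rw [norm_mul, Complex.norm_conj]
  have hp : (‖ω * x3‖)^2 = t^2 * c^2 := by
    rw [norm_mul]; ring
  have h2 : ‖(x1 + ω * x2) - (starRingEnd ℂ) (x1 + ω * x2) * (ω * x3)‖
      + (‖ω * x3‖)^2 ≤ a + t * b + (1 - t^2) * (X2 * c) + t^2 * c^2 := by
    rw [hp]; exact add_le_add_left h1 _
  refine lt_of_le_of_lt h2 ?_
  -- now pure real inequality: a + t*b + (1-t^2)*(X2*c) + t^2*c^2 < 1
  have hc1 : c < 1 := by nlinarith
  have hX2c : X2 * (1 - c^2) ≤ b + a * c := by nlinarith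
  have htc : t * c < 1 := by nlinarith [mul_nonneg (sub_nonneg.2 hω) hc0]
  have htc2 : 0 < 1 - t^2 * c^2 := by nlinarith [mul_nonneg (mul_nonneg ht0 hc0) (mul_nonneg ht0 hc0), mul_nonneg ht0 hc0]
  nlinarith [mul_nonneg (mul_nonneg (mul_nonneg (sub_nonneg.2 hω) (sub_nonneg.2 hc1.le)) (by nlinarith : (0:ℝ) ≤ 1 - t*c)) hb0,
    mul_pos (by nlinarith : (0:ℝ) < 1 - a - b - c^2) htc2,
    mul_nonneg (mul_nonneg ht0 hc0) hX20,
    mul_le_mul_of_nonneg_left hX2c (mul_nonneg (by nlinarith : (0:ℝ) ≤ 1 - t^2) hc0)]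
end

section
/- The symmetrized bidisc G2 = {(s,p) ∈ C^2 : |s - conj(s)p| + |p|^2 < 1} equals the image of the bidisc D^2 under the map π(z1,z2) = (z1+z2, z1·z2). -/
open Complex

private lemma revTri (X Y : ℂ) : ‖X‖ - ‖Y‖ ≤ ‖X + Y‖ := by
  have h := norm_sub_norm_le X (-Y)
  simpa [sub_neg_eq_add] using h

private lemma keyId (z w : ℂ) :
    (z + w) - (starRingEnd ℂ) (z + w) * (z * w) =
      z * (1 - ((‖w‖ : ℝ) : ℂ) ^ 2) + w * (1 - ((‖z‖ : ℝ) : ℂ) ^ 2) := by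
  have hA : (starRingEnd ℂ) z * z = ((‖z‖ : ℝ) : ℂ) ^ 2 := by
    rw [mul_comm, Complex.mul_conj]
    norm_cast
    rw [Complex.sq_norm]
  have hB : (starRingEnd ℂ) w * w = ((‖w‖ : ℝ) : ℂ) ^ 2 := by
    rw [mul_comm, Complex.mul_conj]
    norm_cast
    rw [Complex.sq_norm]
  simp only [map_add]
  linear_combination (-w) * hA + (-z) * hB

private lemma keyLem (z w : ℂ)
    (h : ‖z * (1 - ((‖w‖ : ℝ) : ℂ) ^ 2) +
        w * (1 - ((‖z‖ : ℝ) : ℂ) ^ 2)‖ +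
      (‖z‖ * ‖w‖) ^ 2 < 1) :
    ‖z‖ < 1 ∧ ‖w‖ < 1 := by
  set a := ‖z‖ with ha
  set b := ‖w‖ with hb
  have ha0 : 0 ≤ a := norm_nonneg z
  have hb0 : 0 ≤ b := norm_nonneg w
  have hX : ‖z * (1 - ((b : ℝ) : ℂ) ^ 2)‖ = a * |1 - b ^ 2| := by
    rw [norm_mul]
    congr 1
    have : (1 - ((b : ℝ) : ℂ) ^ 2) = (((1 - b ^ 2 : ℝ)) : ℂ) := by push_cast; ring
    rw [this, Complex.norm_real, Real.norm_eq_abs]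
  have hY : ‖w * (1 - ((a : ℝ) : ℂ) ^ 2)‖ = b * |1 - a ^ 2| := by
    rw [norm_mul]
    congr 1
    have : (1 - ((a : ℝ) : ℂ) ^ 2) = (((1 - a ^ 2 : ℝ)) : ℂ) := by push_cast; ring
    rw [this, Complex.norm_real, Real.norm_eq_abs]
  have h1 : a * |1 - b ^ 2| - b * |1 - a ^ 2| ≤
      ‖z * (1 - ((b : ℝ) : ℂ) ^ 2) + w * (1 - ((a : ℝ) : ℂ) ^ 2)‖ := by
    rw [← hX, ← hY]; exact revTri _ _
  have h2 : b * |1 - a ^ 2| - a * |1 - b ^ 2| ≤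
      ‖z * (1 - ((b : ℝ) : ℂ) ^ 2) + w * (1 - ((a : ℝ) : ℂ) ^ 2)‖ := by
    rw [← hX, ← hY, add_comm (z * _)]; exact revTri _ _
  have hab : a * b < 1 := by
    nlinarith [norm_nonneg (z * (1 - ((b : ℝ) : ℂ) ^ 2) +
      w * (1 - ((a : ℝ) : ℂ) ^ 2))]
  have hka : a < 1 := by
    by_contra hc
    push_neg at hc
    have hb1 : b < 1 := by nlinarith
    have e1 : |1 - b ^ 2| = 1 - b ^ 2 := abs_of_nonneg (by nlinarith)
    have e2 : |1 - a ^ 2| = a ^ 2 - 1 := by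
      rw [abs_of_nonpos (by nlinarith)]; ring
    rw [e1, e2] at h1
    nlinarith [mul_nonneg (mul_nonneg (by linarith : (0:ℝ) ≤ a - 1)
      (by linarith : (0:ℝ) ≤ 1 - b)) (by linarith : (0:ℝ) ≤ 1 - a * b)]
  have hkb : b < 1 := by
    by_contra hc
    push_neg at hc
    have e1 : |1 - a ^ 2| = 1 - a ^ 2 := abs_of_nonneg (by nlinarith)
    have e2 : |1 - b ^ 2| = b ^ 2 - 1 := by
      rw [abs_of_nonpos (by nlinarith)]; ring
    rw [e1, e2] at h2
    nlinarith [mul_nonneg (mul_nonneg (by linarith : (0:ℝ) ≤ b - 1)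
      (by linarith : (0:ℝ) ≤ 1 - a)) (by linarith : (0:ℝ) ≤ 1 - a * b)]
  exact ⟨hka, hkb⟩

theorem symBidisc_eq_image :
    {p : ℂ × ℂ | ‖p.1 - (starRingEnd ℂ) p.1 * p.2‖ +
        (‖p.2‖) ^ 2 < 1} =
      (fun z : ℂ × ℂ => (z.1 + z.2, z.1 * z.2)) ''
        {z : ℂ × ℂ | ‖z.1‖ < 1 ∧ ‖z.2‖ < 1} := by
  ext ⟨s, p⟩
  simp only [Set.mem_setOf_eq, Set.mem_image, Prod.mk.injEq, Prod.exists]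
  constructor
  · intro h
    obtain ⟨d, hd⟩ : ∃ d : ℂ, d ^ 2 = s ^ 2 - 4 * p :=
      IsAlgClosed.exists_pow_nat_eq (s ^ 2 - 4 * p) (by norm_num : 0 < 2)
    set z := (s + d) / 2 with hz
    set w := (s - d) / 2 with hw
    have hzw : z + w = s := by rw [hz, hw]; ring
    have hzw2 : z * w = p := by rw [hz, hw]; linear_combination (-1/4 : ℂ) * hd
    rw [← hzw, ← hzw2, keyId z w, norm_mul] at h
    obtain ⟨h1, h2⟩ := keyLem z w h
    exact ⟨z, w, ⟨h1, h2⟩, hzw, hzw2⟩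
  · rintro ⟨z, w, hzw, hs, hp⟩
    obtain ⟨hz, hw⟩ := hzw
    subst hs hp
    rw [keyId z w]
    have hX : ‖z * (1 - ((‖w‖ : ℝ) : ℂ) ^ 2)‖ =
        ‖z‖ * (1 - ‖w‖ ^ 2) := by
      rw [norm_mul]
      congr 1
      have : (1 - ((‖w‖ : ℝ) : ℂ) ^ 2) = (((1 - ‖w‖ ^ 2 : ℝ)) : ℂ) := by
        push_cast; ring
      rw [this, Complex.norm_real, Real.norm_eq_abs, _root_.abs_of_nonneg (by nlinarith [norm_nonneg w])]
    have hY : ‖w * (1 - ((‖z‖ : ℝ) : ℂ) ^ 2)‖ =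
        ‖w‖ * (1 - ‖z‖ ^ 2) := by
      rw [norm_mul]
      congr 1
      have : (1 - ((‖z‖ : ℝ) : ℂ) ^ 2) = (((1 - ‖z‖ ^ 2 : ℝ)) : ℂ) := by
        push_cast; ring
      rw [this, Complex.norm_real, Real.norm_eq_abs, _root_.abs_of_nonneg (by nlinarith [norm_nonneg z])]
    have htri := norm_add_le (z * (1 - ((‖w‖ : ℝ) : ℂ) ^ 2))
      (w * (1 - ((‖z‖ : ℝ) : ℂ) ^ 2))
    rw [hX, hY] at htri
    rw [norm_mul]
    set a := ‖z‖
    set b := ‖w‖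
    have ha0 : 0 ≤ a := norm_nonneg z
    have hb0 : 0 ≤ b := norm_nonneg w
    nlinarith [mul_pos (mul_pos (by linarith : (0:ℝ) < 1 - a)
      (by linarith : (0:ℝ) < 1 - b)) (by nlinarith : (0:ℝ) < 1 - a * b)]
end

section
/- For ρ ∈ (0,1], define G_{2,ρ} = π(D_ρ) where D_ρ = {z ∈ C^2 : |z1| < 1, |z2| < 1, |z1·z2| < ρ} and π(z) = (z1+z2, z1·z2). Then for any ω with 0 < |ω| ≤ 1, Φ_ω(E) ⊆ G_{2,|ω|}, where Φ_ω(x) = (x1 + ω·x2, ω·x3). -/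
open Complex

def Drho (ρ : ℝ) : Set (ℂ × ℂ) :=
  {z | ‖z.1‖ < 1 ∧ ‖z.2‖ < 1 ∧ ‖z.1 * z.2‖ < ρ}

def G2rho (ρ : ℝ) : Set (ℂ × ℂ) :=
  (fun z : ℂ × ℂ => (z.1 + z.2, z.1 * z.2)) '' Drho ρ

/-- If `|s - s̄ p| + |p|² < 1` for `s = z₁ + z₂`, `p = z₁z₂`, then `|z₁| < 1`. -/
lemma root_small (z1 z2 : ℂ)
    (h : ‖z1 + z2 - (starRingEnd ℂ) (z1 + z2) * (z1 * z2)‖ +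
         (‖z1 * z2‖) ^ 2 < 1) :
    ‖z1‖ < 1 := by
  by_contra hc
  push_neg at hc
  set u := ‖z1‖ with hu
  set v := ‖z2‖ with hv
  have hv0 : 0 ≤ v := norm_nonneg _
  have hp : ‖z1 * z2‖ = u * v := norm_mul z1 z2
  have hpnn : 0 ≤ ‖z1+z2 - (starRingEnd ℂ) (z1+z2) * (z1*z2)‖ := norm_nonneg _
  have huv1 : u * v < 1 := by nlinarith [hp ▸ h]
  have hv1 : v < 1 := by nlinarith
  have key : z1 + z2 - (starRingEnd ℂ) (z1 + z2) * (z1 * z2)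
      = z1 * (1 - (Complex.normSq z2 : ℂ)) + z2 * (1 - (Complex.normSq z1 : ℂ)) := by
    rw [map_add, ← Complex.mul_conj z1, ← Complex.mul_conj z2]
    ring
  have hb : ‖z1 * (1 - (Complex.normSq z2 : ℂ))‖
      ≤ ‖z1 + z2 - (starRingEnd ℂ) (z1 + z2) * (z1 * z2)‖
        + ‖z2 * (1 - (Complex.normSq z1 : ℂ))‖ := by
    rw [key]
    have h0 := norm_sub_le
      (z1 * (1 - (Complex.normSq z2 : ℂ)) + z2 * (1 - (Complex.normSq z1 : ℂ)))
      (z2 * (1 - (Complex.normSq z1 : ℂ)))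
    simpa using h0
  have e1 : ‖z1 * (1 - (Complex.normSq z2 : ℂ))‖ = u * (1 - v^2) := by
    rw [norm_mul, show ((1:ℂ) - (Complex.normSq z2 : ℂ)) = (((1 - Complex.normSq z2 : ℝ)) : ℂ) by
      push_cast; ring, Complex.norm_real, Real.norm_eq_abs,
      _root_.abs_of_nonneg (by rw [Complex.normSq_eq_norm_sq]; nlinarith),
      Complex.normSq_eq_norm_sq]
  have e2 : ‖z2 * (1 - (Complex.normSq z1 : ℂ))‖ = v * (u^2 - 1) := by
    rw [norm_mul, show ((1:ℂ) - (Complex.normSq z1 : ℂ)) = (((1 - Complex.normSq z1 : ℝ)) : ℂ) by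
      push_cast; ring, Complex.norm_real, Real.norm_eq_abs,
      _root_.abs_of_nonpos (by rw [Complex.normSq_eq_norm_sq]; nlinarith),
      Complex.normSq_eq_norm_sq]
    ring
  rw [e1, e2] at hb
  rw [hp] at h
  nlinarith [mul_nonneg (mul_nonneg (sub_nonneg.2 hc) (sub_nonneg.2 hv1.le))
    (sub_nonneg.2 huv1.le)]

lemma real_ineq (a b t r X1 X2 : ℝ) (ha0 : 0 ≤ a) (hb0 : 0 ≤ b) (ht0 : 0 ≤ t)
    (hX10 : 0 ≤ X1) (hX20 : 0 ≤ X2) (hr0 : 0 < r) (hr1 : r ≤ 1)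
    (hx : a + b + t ^ 2 < 1) (hX2b : X2 ≤ b + X1 * t) (hX1a : X1 ≤ a + X2 * t) :
    a + (1 - r ^ 2) * (X2 * t) + r * b + (r * t) ^ 2 < 1 := by
  have hX2' : X2 * (1 - t^2) ≤ b + a * t := by nlinarith [mul_le_mul_of_nonneg_right hX1a ht0]
  have h1t2 : 0 < 1 - t^2 := by nlinarith
  have key1 : 2 * (X2 * t) ≤ b + 2 * t^2 := by
    have k0 : 2 * t * (X2 * (1 - t^2)) ≤ 2 * t * (b + a * t) :=
      mul_le_mul_of_nonneg_left hX2' (by linarith)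
    have ka : a ≤ 1 - b - t^2 := by linarith
    have kat : 2 * t^2 * a ≤ 2 * t^2 * (1 - b - t^2) :=
      mul_le_mul_of_nonneg_left ka (by positivity)
    nlinarith [mul_nonneg hb0 (sq_nonneg (1 - t)), k0, kat, h1t2]
  have k2 : (1 - r) * (2 * (X2 * t)) ≤ (1 - r) * (b + 2 * t^2) :=
    mul_le_mul_of_nonneg_left key1 (by linarith)
  have k3 : r * (1 - r) * (2 * (X2 * t)) ≤ r * (1 - r) * (b + 2 * t^2) :=
    mul_le_mul_of_nonneg_left key1 (by nlinarith)
  nlinarith [k2, k3, mul_nonneg hb0 (sq_nonneg (1 - r))]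

/-- Criterion for membership in the open symmetrized bidisc. -/
lemma exists_roots (s p : ℂ)
    (h : ‖s - (starRingEnd ℂ) s * p‖ + (‖p‖) ^ 2 < 1) :
    ∃ z1 z2 : ℂ, ‖z1‖ < 1 ∧ ‖z2‖ < 1 ∧ z1 + z2 = s ∧ z1 * z2 = p := by
  obtain ⟨d, hd⟩ := IsAlgClosed.exists_pow_nat_eq (s ^ 2 - 4 * p) (n := 2) (by norm_num)
  refine ⟨(s + d) / 2, (s - d) / 2, ?_, ?_, by ring, by linear_combination (-1/4 : ℂ) * hd⟩
  · have hs : (s + d) / 2 + (s - d) / 2 = s := by ring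
    have hpp : (s + d) / 2 * ((s - d) / 2) = p := by linear_combination (-1/4 : ℂ) * hd
    exact root_small _ _ (by rw [hs, hpp]; exact h)
  · have hs : (s - d) / 2 + (s + d) / 2 = s := by ring
    have hpp : (s - d) / 2 * ((s + d) / 2) = p := by linear_combination (-1/4 : ℂ) * hd
    exact root_small _ _ (by rw [hs, hpp]; exact h)

theorem Phi_maps_tetrablock_into_G2rho (ω : ℂ)
    (hω0 : 0 < ‖ω‖) (hω1 : ‖ω‖ ≤ 1) :
    (fun x : ℂ × ℂ × ℂ => (x.1 + ω * x.2.1, ω * x.2.2)) '' tetrablockE ⊆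
      G2rho ‖ω‖ := by
  rintro y ⟨x, hx, rfl⟩
  obtain ⟨x1, x2, x3⟩ := x
  simp only [tetrablockE, Set.mem_setOf_eq] at hx
  set a := ‖x1 - (starRingEnd ℂ) x2 * x3‖ with ha
  set b := ‖x2 - (starRingEnd ℂ) x1 * x3‖ with hbdef
  set t := ‖x3‖ with htdef
  set r := ‖ω‖ with hrdef
  set X1 := ‖x1‖ with hX1def
  set X2 := ‖x2‖ with hX2def
  have ha0 : 0 ≤ a := norm_nonneg _
  have hb0 : 0 ≤ b := norm_nonneg _
  have ht0 : 0 ≤ t := norm_nonneg _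
  have hX10 : 0 ≤ X1 := norm_nonneg _
  have hX20 : 0 ≤ X2 := norm_nonneg _
  have ht1 : t < 1 := by nlinarith
  -- set s, p
  set s := x1 + ω * x2 with hsdef
  set p := ω * x3 with hpdef
  have habsp : ‖p‖ = r * t := norm_mul ω x3
  -- triangle inequality facts
  have hX2b : X2 ≤ b + X1 * t := by
    calc X2 = ‖(x2 - (starRingEnd ℂ) x1 * x3) + (starRingEnd ℂ) x1 * x3‖ := by
          rw [hX2def]; ring_nf
      _ ≤ b + ‖(starRingEnd ℂ) x1 * x3‖ := norm_add_le _ _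
      _ = b + X1 * t := by rw [norm_mul, Complex.norm_conj]
  have hX1a : X1 ≤ a + X2 * t := by
    calc X1 = ‖(x1 - (starRingEnd ℂ) x2 * x3) + (starRingEnd ℂ) x2 * x3‖ := by
          rw [hX1def]; ring_nf
      _ ≤ a + ‖(starRingEnd ℂ) x2 * x3‖ := norm_add_le _ _
      _ = a + X2 * t := by rw [norm_mul, Complex.norm_conj]
  -- key identity and bound for |s - conj s * p|
  have hiden : s - (starRingEnd ℂ) s * p
      = (x1 - (starRingEnd ℂ) x2 * x3) + ((1:ℂ) - (Complex.normSq ω : ℂ)) *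
          ((starRingEnd ℂ) x2 * x3) + ω * (x2 - (starRingEnd ℂ) x1 * x3) := by
    rw [hsdef, hpdef, map_add, map_mul, ← Complex.mul_conj ω]
    ring
  have hnsq : ‖(1:ℂ) - (Complex.normSq ω : ℂ)‖ = 1 - r^2 := by
    rw [show ((1:ℂ) - (Complex.normSq ω : ℂ)) = (((1 - Complex.normSq ω : ℝ)) : ℂ) by
      push_cast; ring, Complex.norm_real, Real.norm_eq_abs,
      _root_.abs_of_nonneg (by rw [Complex.normSq_eq_norm_sq]; nlinarith),
      Complex.normSq_eq_norm_sq]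
  have hbound : ‖s - (starRingEnd ℂ) s * p‖ ≤ a + (1 - r^2) * (X2 * t) + r * b := by
    rw [hiden]
    calc ‖(x1 - (starRingEnd ℂ) x2 * x3) + ((1:ℂ) - (Complex.normSq ω : ℂ)) *
            ((starRingEnd ℂ) x2 * x3) + ω * (x2 - (starRingEnd ℂ) x1 * x3)‖
        ≤ ‖(x1 - (starRingEnd ℂ) x2 * x3) + ((1:ℂ) - (Complex.normSq ω : ℂ)) *
            ((starRingEnd ℂ) x2 * x3)‖ + ‖ω * (x2 - (starRingEnd ℂ) x1 * x3)‖ :=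
          norm_add_le _ _
      _ ≤ a + ‖((1:ℂ) - (Complex.normSq ω : ℂ)) * ((starRingEnd ℂ) x2 * x3)‖
            + ‖ω * (x2 - (starRingEnd ℂ) x1 * x3)‖ := by
          have := norm_add_le (x1 - (starRingEnd ℂ) x2 * x3)
            (((1:ℂ) - (Complex.normSq ω : ℂ)) * ((starRingEnd ℂ) x2 * x3))
          linarith
      _ = a + (1 - r^2) * (X2 * t) + r * b := by
          rw [norm_mul, norm_mul, norm_mul, Complex.norm_conj, hnsq]
  -- the real inequality
  have hfinal : ‖s - (starRingEnd ℂ) s * p‖ + (‖p‖) ^ 2 < 1 := by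
    rw [habsp]
    have hri := real_ineq a b t r X1 X2 ha0 hb0 ht0 hX10 hX20 hω0 hω1 hx hX2b hX1a
    linarith [hbound]
  obtain ⟨z1, z2, hz1, hz2, hsum, hprod⟩ := exists_roots s p hfinal
  refine ⟨(z1, z2), ⟨hz1, hz2, ?_⟩, ?_⟩
  · show ‖z1 * z2‖ < r
    rw [hprod, habsp]
    calc r * t < r * 1 := by exact mul_lt_mul_of_pos_left ht1 hω0
      _ = r := mul_one r
  · show (z1 + z2, z1 * z2) = (x1 + ω * x2, ω * x3)
    rw [hsum, hprod]
end

section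
/- For any ω with 0 < |ω| ≤ 1 and any (s,p) ∈ G_{2,|ω|}, the point x = ((s - conj(s)p)/(1 - |p|^2), ((conj(s) - s·conj(p))/(1 - |p|^2))·(p/ω), p/ω) lies in the tetrablock E and satisfies (x1 + ω·x2, ω·x3) = (s, p). In particular Φ_ω(E) = G_{2,|ω|}. -/
set_option maxHeartbeats 1000000

open Complex

lemma mul_conj_eq (z : ℂ) : z * (starRingEnd ℂ) z = (((‖z‖)^2 : ℝ) : ℂ) := by
  rw [Complex.mul_conj]; norm_cast; exact (Complex.normSq_eq_norm_sq z)

lemma abs_sub_le_abs_add (A B : ℂ) : ‖A‖ - ‖B‖ ≤ ‖A + B‖ := by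
  have := norm_sub_norm_le A (-B)
  simpa [norm_neg, sub_neg_eq_add] using this

lemma root_lt (s p z : ℂ) (hz : z*z - s*z + p = 0)
    (h : ‖s - (starRingEnd ℂ) s * p‖ < 1 - (‖p‖)^2) :
    ‖z‖ < 1 := by
  by_contra hr
  push_neg at hr
  set r := ‖z‖ with hrdef
  set q := ‖p‖ with hqdef
  have hq0 : 0 ≤ q := norm_nonneg p
  have habs0 : 0 ≤ ‖s - (starRingEnd ℂ) s * p‖ := norm_nonneg _
  have hq : q < 1 := by nlinarith
  have hsz : s * z = z*z + p := by linear_combination -hz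
  have hsbar : (starRingEnd ℂ) s * (starRingEnd ℂ) z
      = (starRingEnd ℂ) z * (starRingEnd ℂ) z + (starRingEnd ℂ) p := by
    have := congrArg (starRingEnd ℂ) hsz
    simpa [map_mul, map_add] using this
  have key : z * (starRingEnd ℂ) z * (s - (starRingEnd ℂ) s * p)
      = z * (z * (starRingEnd ℂ) z - p * (starRingEnd ℂ) p)
        + p * (starRingEnd ℂ) z * (1 - z * (starRingEnd ℂ) z) := by
    linear_combination (starRingEnd ℂ) z * hsz - z * p * hsbar
  have e1 : z * (starRingEnd ℂ) z - p * (starRingEnd ℂ) p = ((r^2 - q^2 : ℝ) : ℂ) := by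
    rw [mul_conj_eq, mul_conj_eq]; push_cast; ring
  have e2 : (1 : ℂ) - z * (starRingEnd ℂ) z = ((1 - r^2 : ℝ) : ℂ) := by
    rw [mul_conj_eq]; push_cast; ring
  have habs1 : ‖z * (z * (starRingEnd ℂ) z - p * (starRingEnd ℂ) p)‖
      = r * (r^2 - q^2) := by
    rw [norm_mul, e1, Complex.norm_real, Real.norm_eq_abs, _root_.abs_of_nonneg (by nlinarith : (0:ℝ) ≤ r^2 - q^2)]
  have habs2 : ‖p * (starRingEnd ℂ) z * (1 - z * (starRingEnd ℂ) z)‖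
      = q * r * (r^2 - 1) := by
    rw [norm_mul, norm_mul, Complex.norm_conj, e2, Complex.norm_real, Real.norm_eq_abs,
      _root_.abs_of_nonpos (by nlinarith : (1 - r^2 : ℝ) ≤ 0)]
    ring
  have hub : r * (r^2 - q^2) - q * r * (r^2 - 1)
      ≤ r^2 * ‖s - (starRingEnd ℂ) s * p‖ := by
    have h1 : ‖z * (starRingEnd ℂ) z * (s - (starRingEnd ℂ) s * p)‖
        = r^2 * ‖s - (starRingEnd ℂ) s * p‖ := by
      rw [norm_mul, norm_mul, Complex.norm_conj]; ring
    rw [← h1, key]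
    calc r * (r^2 - q^2) - q * r * (r^2 - 1)
        = ‖z * (z * (starRingEnd ℂ) z - p * (starRingEnd ℂ) p)‖
          - ‖p * (starRingEnd ℂ) z * (1 - z * (starRingEnd ℂ) z)‖ := by
          rw [habs1, habs2]
      _ ≤ _ := abs_sub_le_abs_add _ _
  have hfact : 0 ≤ r * (1 - q) * (r - 1) * (r - q) := by
    apply mul_nonneg; apply mul_nonneg; apply mul_nonneg <;> nlinarith
    all_goals nlinarith
  nlinarith [mul_lt_mul_of_pos_left h (by nlinarith : (0:ℝ) < r^2)]

lemma smsbar_lt (z1 z2 : ℂ) (h1 : ‖z1‖ < 1) (h2 : ‖z2‖ < 1) :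
    ‖(z1 + z2) - (starRingEnd ℂ) (z1 + z2) * (z1 * z2)‖
      < 1 - (‖z1 * z2‖)^2 := by
  set a := ‖z1‖ with ha
  set b := ‖z2‖ with hb
  have ha0 : 0 ≤ a := norm_nonneg z1
  have hb0 : 0 ≤ b := norm_nonneg z2
  have key : (z1 + z2) - (starRingEnd ℂ) (z1 + z2) * (z1 * z2)
      = z1 * ((1 - b^2 : ℝ) : ℂ) + z2 * ((1 - a^2 : ℝ) : ℂ) := by
    have e1 := mul_conj_eq z1
    have e2 := mul_conj_eq z2
    rw [← ha] at e1
    rw [← hb] at e2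
    simp only [map_add]
    push_cast at e1 e2 ⊢
    linear_combination -(z1 * e2) - z2 * e1
  have hbound : ‖(z1 + z2) - (starRingEnd ℂ) (z1 + z2) * (z1 * z2)‖
      ≤ a * (1 - b^2) + b * (1 - a^2) := by
    rw [key]
    calc ‖z1 * ((1 - b^2 : ℝ) : ℂ) + z2 * ((1 - a^2 : ℝ) : ℂ)‖
        ≤ ‖z1 * ((1 - b^2 : ℝ) : ℂ)‖ + ‖z2 * ((1 - a^2 : ℝ) : ℂ)‖ :=
          norm_add_le _ _
      _ = a * (1 - b^2) + b * (1 - a^2) := by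
          rw [norm_mul, norm_mul, Complex.norm_real, Real.norm_eq_abs, Complex.norm_real, Real.norm_eq_abs,
            _root_.abs_of_nonneg (by nlinarith : (0:ℝ) ≤ 1 - b^2),
            _root_.abs_of_nonneg (by nlinarith : (0:ℝ) ≤ 1 - a^2)]
  have habm : ‖z1 * z2‖ = a * b := norm_mul z1 z2
  rw [habm]
  nlinarith [mul_pos (mul_pos (by linarith : (0:ℝ) < 1 - a) (by linarith : (0:ℝ) < 1 - b))
    (by nlinarith : (0:ℝ) < 1 - a*b)]

lemma E_ineq (ω x1 x2 x3 : ℂ) (hu : ‖ω‖ ≤ 1)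
    (hx : ‖x1 - (starRingEnd ℂ) x2 * x3‖ +
          ‖x2 - (starRingEnd ℂ) x1 * x3‖ + (‖x3‖)^2 < 1) :
    ‖(x1 + ω*x2) - (starRingEnd ℂ) (x1 + ω*x2) * (ω*x3)‖
      < 1 - (‖ω*x3‖)^2 := by
  set a := ‖x1 - (starRingEnd ℂ) x2 * x3‖ with hadef
  set b := ‖x2 - (starRingEnd ℂ) x1 * x3‖ with hbdef
  set t := ‖x3‖ with htdef
  set m := ‖x2‖ with hmdef
  set u := ‖ω‖ with hudef
  have ha0 : 0 ≤ a := norm_nonneg _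
  have hb0 : 0 ≤ b := norm_nonneg _
  have ht0 : 0 ≤ t := norm_nonneg _
  have hm0 : 0 ≤ m := norm_nonneg _
  have hu0 : 0 ≤ u := norm_nonneg _
  have ht1 : t < 1 := by nlinarith
  have htri1 : ‖x1‖ ≤ a + m * t := by
    calc ‖x1‖
        = ‖(x1 - (starRingEnd ℂ) x2 * x3) + (starRingEnd ℂ) x2 * x3‖ := by
          congr 1; ring
      _ ≤ a + ‖(starRingEnd ℂ) x2 * x3‖ := norm_add_le _ _
      _ = a + m * t := by rw [norm_mul, Complex.norm_conj]
  have htri2 : m ≤ b + ‖x1‖ * t := by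
    calc m = ‖(x2 - (starRingEnd ℂ) x1 * x3) + (starRingEnd ℂ) x1 * x3‖ := by
          rw [hmdef]; congr 1; ring
      _ ≤ b + ‖(starRingEnd ℂ) x1 * x3‖ := norm_add_le _ _
      _ = b + ‖x1‖ * t := by rw [norm_mul, Complex.norm_conj]
  have hm : m * (1 - t^2) ≤ b + a * t := by
    nlinarith [mul_le_mul_of_nonneg_right htri1 ht0]
  have key : (x1 + ω*x2) - (starRingEnd ℂ) (x1 + ω*x2) * (ω*x3)
      = ((x1 - (starRingEnd ℂ) x2 * x3) + ω * (x2 - (starRingEnd ℂ) x1 * x3))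
        + ((1 - u^2 : ℝ) : ℂ) * ((starRingEnd ℂ) x2 * x3) := by
    have e1 := mul_conj_eq ω
    rw [← hudef] at e1
    simp only [map_add, map_mul]
    push_cast at e1 ⊢
    linear_combination -((starRingEnd ℂ) x2 * x3) * e1
  have hbound : ‖(x1 + ω*x2) - (starRingEnd ℂ) (x1 + ω*x2) * (ω*x3)‖
      ≤ a + u * b + (1 - u^2) * (m * t) := by
    rw [key]
    calc ‖((x1 - (starRingEnd ℂ) x2 * x3) + ω * (x2 - (starRingEnd ℂ) x1 * x3))
            + ((1 - u^2 : ℝ) : ℂ) * ((starRingEnd ℂ) x2 * x3)‖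
        ≤ ‖(x1 - (starRingEnd ℂ) x2 * x3) + ω * (x2 - (starRingEnd ℂ) x1 * x3)‖
          + ‖((1 - u^2 : ℝ) : ℂ) * ((starRingEnd ℂ) x2 * x3)‖ :=
          norm_add_le _ _
      _ ≤ (‖x1 - (starRingEnd ℂ) x2 * x3‖
            + ‖ω * (x2 - (starRingEnd ℂ) x1 * x3)‖)
          + ‖((1 - u^2 : ℝ) : ℂ) * ((starRingEnd ℂ) x2 * x3)‖ :=
          add_le_add_left (norm_add_le _ _) _
      _ = a + u * b + (1 - u^2) * (m * t) := by
          rw [norm_mul, norm_mul, norm_mul, Complex.norm_conj, Complex.norm_real, Real.norm_eq_abs,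
            _root_.abs_of_nonneg (by nlinarith : (0:ℝ) ≤ 1 - u^2)]
  have habsp : ‖ω * x3‖ = u * t := norm_mul ω x3
  rw [habsp]
  refine lt_of_le_of_lt hbound ?_
  have h1 : 0 ≤ (1 - u^2) * t * (b + a*t - m*(1-t^2)) := by
    apply mul_nonneg (mul_nonneg (by nlinarith) ht0) (by linarith)
  have h2 : 0 ≤ b * (1 - u*t) * ((1-t) * (1-u)) := by
    apply mul_nonneg (mul_nonneg hb0 (by nlinarith)) (mul_nonneg (by linarith) (by linarith))
  have hut : u * t < 1 := by nlinarith
  have h3 : 0 < (1 - t^2 - a - b) * (1 - u^2*t^2) := by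
    apply mul_pos (by linarith) (by nlinarith [mul_nonneg hu0 ht0])
  have h4 : 0 < 1 - t^2 := by nlinarith
  nlinarith [h1, h2, h3, h4]

theorem Phi_surjective_onto_G2rho (ω : ℂ)
    (hω0 : 0 < ‖ω‖) (hω1 : ‖ω‖ ≤ 1) :
    (∀ s p : ℂ, (s, p) ∈ G2rho (‖ω‖) →
      (((s - (starRingEnd ℂ) s * p) / (1 - ((‖p‖ : ℝ) : ℂ) ^ 2),
        (((starRingEnd ℂ) s - s * (starRingEnd ℂ) p) / (1 - ((‖p‖ : ℝ) : ℂ) ^ 2)) * (p / ω),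
        p / ω) ∈ tetrablockE ∧
      ((s - (starRingEnd ℂ) s * p) / (1 - ((‖p‖ : ℝ) : ℂ) ^ 2) +
          ω * ((((starRingEnd ℂ) s - s * (starRingEnd ℂ) p) / (1 - ((‖p‖ : ℝ) : ℂ) ^ 2)) * (p / ω)),
        ω * (p / ω)) = (s, p))) ∧
    (fun x : ℂ × ℂ × ℂ => (x.1 + ω * x.2.1, ω * x.2.2)) '' tetrablockE =
      G2rho (‖ω‖) := by
  have hωne : ω ≠ 0 := by
    intro h; rw [h] at hω0; simp at hω0
  have main : ∀ s p : ℂ, (s, p) ∈ G2rho (‖ω‖) →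
      (((s - (starRingEnd ℂ) s * p) / (1 - ((‖p‖ : ℝ) : ℂ) ^ 2),
        (((starRingEnd ℂ) s - s * (starRingEnd ℂ) p) / (1 - ((‖p‖ : ℝ) : ℂ) ^ 2)) * (p / ω),
        p / ω) ∈ tetrablockE ∧
      ((s - (starRingEnd ℂ) s * p) / (1 - ((‖p‖ : ℝ) : ℂ) ^ 2) +
          ω * ((((starRingEnd ℂ) s - s * (starRingEnd ℂ) p) / (1 - ((‖p‖ : ℝ) : ℂ) ^ 2)) * (p / ω)),
        ω * (p / ω)) = (s, p)) := by
    rintro s p ⟨⟨z1, z2⟩, hzmem, heq⟩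
    obtain ⟨h1, h2, h3⟩ := hzmem
    simp only [Prod.mk.injEq] at heq
    obtain ⟨hs, hp⟩ := heq
    subst hs; subst hp
    set q := ‖z1 * z2‖ with hqdef
    have hq0 : (0:ℝ) ≤ q := norm_nonneg _
    have hq1 : q < 1 := by
      rw [hqdef, norm_mul]
      nlinarith [norm_nonneg z1, norm_nonneg z2]
    have hqu : q < ‖ω‖ := h3
    have hDr : (0:ℝ) < 1 - q^2 := by nlinarith
    have hD : (1 : ℂ) - (q : ℂ)^2 = ((1 - q^2 : ℝ) : ℂ) := by push_cast; ring
    have hDne : (1 : ℂ) - (q : ℂ)^2 ≠ 0 := by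
      rw [hD]; exact_mod_cast hDr.ne'
    have hsm := smsbar_lt z1 z2 h1 h2
    have hX1 : ‖((z1 + z2) - (starRingEnd ℂ) (z1 + z2) * (z1 * z2))
        / (1 - (q : ℂ)^2)‖ < 1 := by
      rw [norm_div, hD, Complex.norm_real, Real.norm_eq_abs, _root_.abs_of_pos hDr, div_lt_one hDr]
      exact hsm
    have hconj : (starRingEnd ℂ) (((z1 + z2) - (starRingEnd ℂ) (z1 + z2) * (z1 * z2))
          / (1 - (q : ℂ)^2))
        = ((starRingEnd ℂ) (z1 + z2) - (z1 + z2) * (starRingEnd ℂ) (z1 * z2))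
          / (1 - (q : ℂ)^2) := by
      rw [map_div₀]
      congr 1
      · rw [map_sub, map_mul, Complex.conj_conj]
      · rw [map_sub, map_one, map_pow, Complex.conj_ofReal]
    have ht : ‖z1 * z2 / ω‖ < 1 := by
      rw [norm_div, div_lt_one hω0]; exact hqu
    have ht0 : (0:ℝ) ≤ ‖z1 * z2 / ω‖ := norm_nonneg _
    constructor
    · -- tetrablock membership
      simp only [tetrablockE, Set.mem_setOf_eq]
      rw [← hconj]
      have e : ((z1 + z2) - (starRingEnd ℂ) (z1 + z2) * (z1 * z2)) / (1 - (q : ℂ)^2)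
            - (starRingEnd ℂ) ((starRingEnd ℂ) (((z1 + z2) - (starRingEnd ℂ) (z1 + z2) * (z1 * z2))
                / (1 - (q : ℂ)^2)) * (z1 * z2 / ω)) * (z1 * z2 / ω)
          = (((z1 + z2) - (starRingEnd ℂ) (z1 + z2) * (z1 * z2)) / (1 - (q : ℂ)^2))
            * ((1 - (‖z1 * z2 / ω‖)^2 : ℝ) : ℂ) := by
        have e3 := mul_conj_eq (z1 * z2 / ω)
        rw [map_mul, Complex.conj_conj]
        push_cast at e3 ⊢
        linear_combination -(((z1 + z2) - (starRingEnd ℂ) (z1 + z2) * (z1 * z2))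
          / (1 - (q : ℂ)^2)) * e3
      rw [e, sub_self, norm_zero, norm_mul, Complex.norm_real, Real.norm_eq_abs,
        _root_.abs_of_nonneg (by nlinarith : (0:ℝ) ≤ 1 - (‖z1 * z2 / ω‖)^2)]
      have hpp : (0:ℝ) < 1 - ‖z1 * z2 / ω‖ ^ 2 := by nlinarith
      nlinarith [mul_pos (sub_pos.mpr hX1) hpp]
    · -- the equation
      simp only [Prod.mk.injEq]
      constructor
      · have hpc : z1 * z2 * (starRingEnd ℂ) (z1 * z2) = ((q^2 : ℝ) : ℂ) := mul_conj_eq _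
        push_cast at hpc
        have step1 : ω * ((((starRingEnd ℂ) (z1+z2) - (z1+z2) * (starRingEnd ℂ) (z1*z2))
              / (1 - (q:ℂ)^2)) * (z1 * z2 / ω))
            = (((starRingEnd ℂ) (z1+z2) - (z1+z2) * (starRingEnd ℂ) (z1*z2)) * (z1 * z2))
              / (1 - (q:ℂ)^2) := by
          field_simp
        rw [step1, ← add_div,
          show (z1 + z2 - (starRingEnd ℂ) (z1+z2) * (z1*z2))
              + ((starRingEnd ℂ) (z1+z2) - (z1+z2) * (starRingEnd ℂ) (z1*z2)) * (z1*z2)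
            = (z1+z2) * (1 - (q:ℂ)^2) from by linear_combination -(z1+z2) * hpc,
          mul_div_assoc, div_self hDne, mul_one]
      · rw [mul_comm]; exact div_mul_cancel₀ _ hωne
  refine ⟨main, ?_⟩
  apply Set.Subset.antisymm
  · rintro ⟨s, p⟩ ⟨x, hxE, hmap⟩
    simp only [Prod.mk.injEq] at hmap
    obtain ⟨hs, hp⟩ := hmap
    simp only [tetrablockE, Set.mem_setOf_eq] at hxE
    have hineq := E_ineq ω x.1 x.2.1 x.2.2 hω1 hxE
    rw [hs, hp] at hineq
    have ht3 : ‖x.2.2‖ < 1 := by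
      nlinarith [norm_nonneg (x.1 - (starRingEnd ℂ) x.2.1 * x.2.2),
        norm_nonneg (x.2.1 - (starRingEnd ℂ) x.1 * x.2.2),
        norm_nonneg x.2.2]
    obtain ⟨w, hw⟩ := IsAlgClosed.exists_pow_nat_eq (s^2 - 4*p) (n := 2) (by norm_num)
    have hz1 : ((s+w)/2) * ((s+w)/2) - s * ((s+w)/2) + p = 0 := by linear_combination hw/4
    have hz2 : ((s-w)/2) * ((s-w)/2) - s * ((s-w)/2) + p = 0 := by linear_combination hw/4
    have hz12 : ((s+w)/2) * ((s-w)/2) = p := by linear_combination -hw/4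
    refine ⟨((s+w)/2, (s-w)/2), ⟨root_lt s p _ hz1 hineq, root_lt s p _ hz2 hineq, ?_⟩, ?_⟩
    · rw [hz12, ← hp, norm_mul]
      nlinarith
    · simp only [Prod.mk.injEq]
      exact ⟨by ring, hz12⟩
  · rintro ⟨s, p⟩ hsp
    obtain ⟨hE, heq⟩ := main s p hsp
    exact ⟨_, hE, heq⟩
end

section
/- Let x ∈ C^3, ω ∈ C with 0 < |ω| ≤ 1, and (a,c) ∈ C^2 \ {0}. If the hyperplane {y ∈ C^3 : a·y1 + a·ω·y2 + c·ω·y3 = a·x1 + a·ω·x2 + c·ω·x3} is disjoint from E, then the affine line {(s,p) : a·s + c·p = a·(x1 + ω·x2) + c·ω·x3} is disjoint from G_{2,|ω|}. -/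
open Complex

theorem hyperplane_disjoint_implies_line_disjoint
    (x : ℂ × ℂ × ℂ) (ω : ℂ) (hω0 : 0 < ‖ω‖) (hω1 : ‖ω‖ ≤ 1)
    (a c : ℂ) (hac : (a, c) ≠ (0, 0))
    (h : ∀ y : ℂ × ℂ × ℂ,
      a * y.1 + a * ω * y.2.1 + c * ω * y.2.2 =
        a * x.1 + a * ω * x.2.1 + c * ω * x.2.2 →
      y ∉ tetrablockE) :
    ∀ sp : ℂ × ℂ, a * sp.1 + c * sp.2 = a * (x.1 + ω * x.2.1) + c * (ω * x.2.2) →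
      sp ∉ G2rho ‖ω‖ := by
  rintro ⟨s, p⟩ hline ⟨⟨z1, z2⟩, ⟨h1, h2, h3⟩, heq⟩
  simp only [Prod.mk.injEq] at heq
  obtain ⟨hs, hp⟩ := heq
  have hω : ω ≠ 0 := by
    intro hw; rw [hw] at hω0; simp at hω0
  -- basic bounds
  have ha1 : 0 ≤ norm z1 := (norm_nonneg _)
  have hb1 : 0 ≤ norm z2 := (norm_nonneg _)
  have hpabs : norm p < 1 := by
    rw [← hp]; exact lt_of_lt_of_le h3 hω1
  have hd : 0 < 1 - Complex.normSq p := by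
    rw [← Complex.sq_norm]; nlinarith [norm_nonneg p]
  have hdC : (1 : ℂ) - (Complex.normSq p : ℂ) ≠ 0 := by
    rw [show (1 : ℂ) - (Complex.normSq p : ℂ) = ((1 - Complex.normSq p : ℝ) : ℂ) by push_cast; ring]
    exact_mod_cast hd.ne'
  set β : ℂ := (s - p * (starRingEnd ℂ) s) / (1 - (Complex.normSq p : ℂ)) with hβ
  have hconjβ : (starRingEnd ℂ) β =
      ((starRingEnd ℂ) s - (starRingEnd ℂ) p * s) / (1 - (Complex.normSq p : ℂ)) := by
    rw [hβ, map_div₀, map_sub, map_mul, Complex.conj_conj]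
    congr 1
    simp [map_sub, Complex.conj_ofReal]
  have hβs : β + p * (starRingEnd ℂ) β = s := by
    rw [hconjβ, hβ]
    field_simp
    linear_combination (-s) * Complex.mul_conj p
  -- |β| < 1
  have e1 : s - p * (starRingEnd ℂ) s =
      z1 * (1 - (Complex.normSq z2 : ℂ)) + z2 * (1 - (Complex.normSq z1 : ℂ)) := by
    rw [← hs, ← hp, map_add]
    linear_combination (-z2) * Complex.mul_conj z1 + (-z1) * Complex.mul_conj z2
  have habsnum : norm (s - p * (starRingEnd ℂ) s) < 1 - Complex.normSq p := by
    have n1 : Complex.normSq z1 = (norm z1)^2 := (Complex.sq_norm z1).symm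
    have n2 : Complex.normSq z2 = (norm z2)^2 := (Complex.sq_norm z2).symm
    have np : Complex.normSq p = ((norm z1) * (norm z2))^2 := by
      rw [← Complex.sq_norm, ← hp, norm_mul]
    have c2 : (1 : ℂ) - (Complex.normSq z2 : ℂ) = ((1 - Complex.normSq z2 : ℝ) : ℂ) := by
      push_cast; ring
    have c1 : (1 : ℂ) - (Complex.normSq z1 : ℂ) = ((1 - Complex.normSq z1 : ℝ) : ℂ) := by
      push_cast; ring
    rw [e1, c1, c2]
    calc norm (z1 * ((1 - Complex.normSq z2 : ℝ) : ℂ) +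
            z2 * ((1 - Complex.normSq z1 : ℝ) : ℂ))
        ≤ norm (z1 * ((1 - Complex.normSq z2 : ℝ) : ℂ)) +
            norm (z2 * ((1 - Complex.normSq z1 : ℝ) : ℂ)) := norm_add_le _ _
      _ = norm z1 * (1 - Complex.normSq z2) +
            norm z2 * (1 - Complex.normSq z1) := by
          simp only [norm_mul, Complex.norm_real, Real.norm_eq_abs]
          rw [_root_.abs_of_nonneg (show (0:ℝ) ≤ 1 - Complex.normSq z2 by nlinarith),
            _root_.abs_of_nonneg (show (0:ℝ) ≤ 1 - Complex.normSq z1 by nlinarith)]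
      _ < 1 - Complex.normSq p := by
          rw [np, n1, n2]
          have key : (1 - norm z1) * (1 - norm z2) *
              (1 - norm z1 * norm z2) > 0 := by
            apply mul_pos (mul_pos (by linarith) (by linarith))
            nlinarith
          nlinarith
  have hβlt : norm β < 1 := by
    rw [hβ, norm_div]
    have : norm (1 - (Complex.normSq p : ℂ)) = 1 - Complex.normSq p := by
      have : (1 : ℂ) - (Complex.normSq p : ℂ) = ((1 - Complex.normSq p : ℝ) : ℂ) := by
        push_cast; ring
      rw [this, Complex.norm_real, Real.norm_eq_abs, abs_of_pos hd]
    rw [this, div_lt_one hd]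
    exact habsnum
  -- the point y
  set w : ℂ := p / ω with hw
  have hwabs : norm w < 1 := by
    rw [hw, norm_div, div_lt_one hω0, ← hp]
    exact h3
  have hT : Complex.normSq w < 1 := by rw [← Complex.sq_norm]; nlinarith [norm_nonneg w]
  have hT0 : 0 ≤ Complex.normSq w := Complex.normSq_nonneg w
  set y : ℂ × ℂ × ℂ := (β, (starRingEnd ℂ) β * w, w) with hy
  have hymem : y ∈ tetrablockE := by
    show norm (y.1 - (starRingEnd ℂ) y.2.1 * y.2.2) +
       norm (y.2.1 - (starRingEnd ℂ) y.1 * y.2.2) +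
       (norm y.2.2) ^ 2 < 1
    have t1 : y.1 - (starRingEnd ℂ) y.2.1 * y.2.2 = β * (1 - (Complex.normSq w : ℂ)) := by
      show β - (starRingEnd ℂ) ((starRingEnd ℂ) β * w) * w = β * (1 - (Complex.normSq w : ℂ))
      rw [map_mul, Complex.conj_conj]
      linear_combination (-β) * Complex.mul_conj w
    have t2 : y.2.1 - (starRingEnd ℂ) y.1 * y.2.2 = 0 := by
      show (starRingEnd ℂ) β * w - (starRingEnd ℂ) β * w = 0
      ring
    rw [t1, t2, norm_zero, norm_mul]
    have : norm (1 - (Complex.normSq w : ℂ)) = 1 - Complex.normSq w := by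
      have e : (1 : ℂ) - (Complex.normSq w : ℂ) = ((1 - Complex.normSq w : ℝ) : ℂ) := by
        push_cast; ring
      rw [e, Complex.norm_real, Real.norm_eq_abs, abs_of_pos (by linarith)]
    rw [this]
    show norm β * (1 - Complex.normSq w) + 0 + (norm w) ^ 2 < 1
    rw [Complex.sq_norm]
    nlinarith [norm_nonneg β]
  have hlin : a * y.1 + a * ω * y.2.1 + c * ω * y.2.2 =
      a * x.1 + a * ω * x.2.1 + c * ω * x.2.2 := by
    show a * β + a * ω * ((starRingEnd ℂ) β * w) + c * ω * w =
      a * x.1 + a * ω * x.2.1 + c * ω * x.2.2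
    have hwp : ω * w = p := by rw [hw]; field_simp
    have : a * β + a * ω * ((starRingEnd ℂ) β * w) + c * ω * w = a * s + c * p := by
      linear_combination a * hβs + (a * (starRingEnd ℂ) β + c) * hwp
    rw [this, hline]; ring
  exact h y hlin hymem
end

section
/- For r ∈ [0,1) and every ω ∈ C with |ω| ≤ 1, the complex hyperplane {y ∈ C^3 : -(y1 - 1) - ω·(y2 - r) + ω·(y3 - r) = 0} through the boundary point (1, r, r) is disjoint from the tetrablock E. -/
open Complex

theorem supporting_hyperplane_at_one_r_r (r : ℝ) (hr0 : 0 ≤ r) (hr1 : r < 1)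
    (ω : ℂ) (hω : ‖ω‖ ≤ 1) :
    ∀ y : ℂ × ℂ × ℂ,
      -(y.1 - 1) - ω * (y.2.1 - (r : ℂ)) + ω * (y.2.2 - (r : ℂ)) = 0 →
      y ∉ tetrablockE := by
  intro y hy hE
  obtain ⟨a, b, c⟩ := y
  simp only [tetrablockE, Set.mem_setOf_eq] at hE
  simp only at hy
  have hyc : -((starRingEnd ℂ) a - 1) - (starRingEnd ℂ) ω * ((starRingEnd ℂ) b - (r : ℂ))
      + (starRingEnd ℂ) ω * ((starRingEnd ℂ) c - (r : ℂ)) = 0 := by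
    have := congrArg (starRingEnd ℂ) hy
    simpa [map_sub, map_mul, map_neg, Complex.conj_ofReal] using this
  set u := ‖a - (starRingEnd ℂ) b * c‖ with hu
  set v := ‖b - (starRingEnd ℂ) a * c‖ with hv
  set t := ‖ω‖ with ht
  set β := ‖b‖ with hβ
  set γ := ‖c‖ with hγ
  have hu0 : 0 ≤ u := norm_nonneg _
  have hv0 : 0 ≤ v := norm_nonneg _
  have ht0 : 0 ≤ t := norm_nonneg _
  have hβ0 : 0 ≤ β := norm_nonneg _
  have hγ0 : 0 ≤ γ := norm_nonneg _
  have hγ1 : γ ^ 2 < 1 := by nlinarith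
  have hγ1' : γ ≤ 1 := by nlinarith
  have ht2 : t ^ 2 ≤ 1 := by nlinarith
  -- identity A
  have hA : (a - (starRingEnd ℂ) b * c) + ω * (b - (starRingEnd ℂ) a * c)
      = 1 - (1 - ω * (starRingEnd ℂ) ω) * ((starRingEnd ℂ) b * c)
        - (ω * (starRingEnd ℂ) ω) * ((starRingEnd ℂ) c * c) := by
    linear_combination (-1 : ℂ) * hy + ω * c * hyc
  have habsω : ω * (starRingEnd ℂ) ω = ((t ^ 2 : ℝ) : ℂ) := by
    rw [Complex.mul_conj]; norm_cast; rw [ht, Complex.sq_norm]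
  have h2 : 1 - (1 - t ^ 2) * (β * γ) - t ^ 2 * γ ^ 2 ≤ u + t * v := by
    have e1 : ‖(1 - ω * (starRingEnd ℂ) ω) * ((starRingEnd ℂ) b * c)‖
        = (1 - t ^ 2) * (β * γ) := by
      rw [norm_mul, norm_mul, habsω, Complex.norm_conj]
      rw [← Complex.ofReal_one, ← Complex.ofReal_sub, Complex.norm_real, Real.norm_eq_abs]
      rw [_root_.abs_of_nonneg (show (0:ℝ) ≤ 1 - t ^ 2 by linarith), ← hβ, ← hγ]
    have e2 : ‖(ω * (starRingEnd ℂ) ω) * ((starRingEnd ℂ) c * c)‖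
        = t ^ 2 * γ ^ 2 := by
      rw [habsω, norm_mul, norm_mul, Complex.norm_real, Real.norm_eq_abs, Complex.norm_conj]
      rw [_root_.abs_of_nonneg (show (0:ℝ) ≤ t ^ 2 by positivity), ← hγ]
      ring
    have tri : (1 : ℝ) ≤ ‖(a - (starRingEnd ℂ) b * c) + ω * (b - (starRingEnd ℂ) a * c)‖
        + (1 - t ^ 2) * (β * γ) + t ^ 2 * γ ^ 2 := by
      have key : (1 : ℂ) = ((a - (starRingEnd ℂ) b * c) + ω * (b - (starRingEnd ℂ) a * c))
          + (1 - ω * (starRingEnd ℂ) ω) * ((starRingEnd ℂ) b * c)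
          + (ω * (starRingEnd ℂ) ω) * ((starRingEnd ℂ) c * c) := by
        rw [hA]; ring
      calc (1 : ℝ) = ‖(1 : ℂ)‖ := by simp
        _ ≤ _ := by
          rw [key]
          refine le_trans (norm_add_le _ _) ?_
          rw [e2]
          gcongr
          refine le_trans (norm_add_le _ _) ?_
          rw [e1]
    have tri2 : ‖(a - (starRingEnd ℂ) b * c) + ω * (b - (starRingEnd ℂ) a * c)‖
        ≤ u + t * v := by
      refine le_trans (norm_add_le _ _) ?_
      rw [norm_mul]
    linarith
  -- identity B bound
  have h3 : β * (1 - γ ^ 2) ≤ v + γ * u := by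
    have hB : (b - (starRingEnd ℂ) a * c) + ((starRingEnd ℂ) (a - (starRingEnd ℂ) b * c)) * c
        = b * (1 - (starRingEnd ℂ) c * c) := by
      simp only [map_sub, map_mul, Complex.conj_conj]
      ring
    have hcc : (starRingEnd ℂ) c * c = ((γ ^ 2 : ℝ) : ℂ) := by
      rw [mul_comm, Complex.mul_conj]; norm_cast; rw [hγ, Complex.sq_norm]
    have e3 : ‖b * (1 - (starRingEnd ℂ) c * c)‖ = β * (1 - γ ^ 2) := by
      rw [norm_mul, hcc, ← Complex.ofReal_one, ← Complex.ofReal_sub, Complex.norm_real, Real.norm_eq_abs]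
      rw [_root_.abs_of_nonneg (show (0:ℝ) ≤ 1 - γ ^ 2 by linarith), ← hβ]
    calc β * (1 - γ ^ 2) = ‖b * (1 - (starRingEnd ℂ) c * c)‖ := e3.symm
      _ = ‖(b - (starRingEnd ℂ) a * c) + ((starRingEnd ℂ) (a - (starRingEnd ℂ) b * c)) * c‖ := by rw [hB]
      _ ≤ v + γ * u := by
          refine le_trans (norm_add_le _ _) ?_
          rw [norm_mul, Complex.norm_conj, ← hu, ← hγ]
          linarith
  -- final contradiction
  have hP : 0 < 1 - γ ^ 2 - u - v := by linarith
  have hD1 : 0 < (1 - t) * ((1 + t) * γ * (β - γ) - v) := by nlinarith [h2, hP]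
  have hX : v < (1 + t) * γ * (β - γ) := by
    rcases mul_pos_iff.mp hD1 with ⟨_, h⟩ | ⟨h1, _⟩
    · linarith
    · linarith
  have hD2 : (1 - γ ^ 2) * (β - γ) ≤ (1 - γ) * v := by
    nlinarith [h3, mul_nonneg hγ0 hP.le]
  have hβγ : 0 < β - γ := by
    by_contra h
    push_neg at h
    nlinarith [mul_nonneg (mul_nonneg (by linarith : (0:ℝ) ≤ 1 + t) hγ0) (by linarith : (0:ℝ) ≤ γ - β)]
  have hγlt : γ < 1 := lt_of_le_of_ne hγ1' (by intro h; rw [h] at hγ1; linarith)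
  have hB2 : (1 - γ) * v < (1 - γ) * ((1 + t) * γ * (β - γ)) :=
    mul_lt_mul_of_pos_left hX (by linarith)
  have htγ : t * γ ≤ 1 := mul_le_one₀ hω hγ0 hγ1'
  have hfin : 0 ≤ (1 - γ) * (β - γ) * (1 - t * γ) :=
    mul_nonneg (mul_nonneg (by linarith) hβγ.le) (by linarith)
  nlinarith [hD2, hB2, hfin]
end

section
/- Let ρ ∈ (0,1), and let λ1, λ2 ∈ C with |λ1| < ρ and |λ2| = 1. Then the affine complex line {(s,p) ∈ C^2 : -λ2·s + p = -λ2·(λ1+λ2) + λ1·λ2} through π(λ1,λ2) is disjoint from G_{2,ρ}. -/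
open Complex

theorem supporting_line_smooth_case (ρ : ℝ) (hρ0 : 0 < ρ) (hρ1 : ρ < 1)
    (lam₁ lam₂ : ℂ) (h1 : ‖lam₁‖ < ρ) (h2 : ‖lam₂‖ = 1) :
    ∀ sp : ℂ × ℂ,
      -lam₂ * sp.1 + sp.2 = -lam₂ * (lam₁ + lam₂) + lam₁ * lam₂ →
      sp ∉ G2rho ρ := by
  rintro sp h ⟨z, ⟨hz1, hz2, -⟩, rfl⟩
  simp only at h
  have key : (z.1 - lam₂) * (z.2 - lam₂) = 0 := by linear_combination h
  rcases mul_eq_zero.1 key with hk | hk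
  · have : z.1 = lam₂ := sub_eq_zero.1 hk
    rw [this, h2] at hz1; exact lt_irrefl 1 hz1
  · have : z.2 = lam₂ := sub_eq_zero.1 hk
    rw [this, h2] at hz2; exact lt_irrefl 1 hz2
end

section
/- For n ≥ 2, a complex hyperplane L = {x ∈ C^n : t1·x1 + ... + tn·xn = 0} satisfies ((1,...,1) + L) ∩ D^n = ∅ for the unit polydisc D^n if and only if [t] = [t'] in projective space for some t' ∈ [0,∞)^n \ {0}; i.e. the set of hyperplanes through (1,...,1) missing D^n is exactly {[(t1,...,tn)] : ti ≥ 0, not all zero}. -/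
open Complex

theorem polydisc_supporting_hyperplanes_at_corner (n : ℕ) (hn : 2 ≤ n)
    (t : Fin n → ℂ) (ht : t ≠ 0) :
    (∀ x : Fin n → ℂ, (∑ i, t i * x i) = 0 →
        ¬(∀ i, ‖1 + x i‖ < 1)) ↔
    (∃ c : ℂ, c ≠ 0 ∧ ∀ i, ∃ r : ℝ, 0 ≤ r ∧ c * t i = (r : ℂ)) := by
  set S : ℂ := ∑ i, t i with hS
  set A : ℝ := ∑ i, ‖t i‖ with hA
  obtain ⟨j, hj⟩ : ∃ j, t j ≠ 0 := by
    by_contra h; push_neg at h; exact ht (funext h)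
  have hApos : 0 < A := by
    apply Finset.sum_pos' (fun i _ => norm_nonneg _)
    exact ⟨j, Finset.mem_univ j, norm_pos_iff.mpr hj⟩
  have hAne : (A : ℂ) ≠ 0 := by exact_mod_cast ne_of_gt hApos
  constructor
  · intro h
    -- show |S| = A
    have htri : ‖S‖ ≤ A := by
      simpa [hA] using norm_sum_le Finset.univ t
    have hge : A ≤ ‖S‖ := by
      by_contra hlt
      push_neg at hlt
      set d : Fin n → ℂ := fun i =>
        if t i = 0 then 0 else S * (starRingEnd ℂ (t i)) / (A * ‖t i‖)
      have hd : ∀ i, t i * d i = S * ((‖t i‖ : ℝ) : ℂ) / A := by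
        intro i
        by_cases hti : t i = 0
        · simp [d, hti]
        · have habs : ((‖t i‖ : ℝ) : ℂ) ≠ 0 := by
            simp [norm_ne_zero_iff, hti]
          have hconj : t i * starRingEnd ℂ (t i) = ((‖t i‖)^2 : ℝ) := by
            rw [Complex.mul_conj]
            simp [Complex.sq_norm]
          simp only [d, if_neg hti]
          field_simp
          push_cast at hconj ⊢
          linear_combination S * hconj
      apply h (fun i => d i - 1)
      · have h1 : ∑ i, t i * (d i - 1) = (∑ i, t i * d i) - S := by
          rw [hS, ← Finset.sum_sub_distrib]
          exact Finset.sum_congr rfl fun i _ => by ring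
        have h2 : ∑ i, t i * d i = S := by
          have hAC : (∑ i, ((‖t i‖ : ℝ) : ℂ)) = (A : ℂ) := by
            rw [hA, Complex.ofReal_sum]
          simp only [hd]
          rw [← Finset.sum_div, ← Finset.mul_sum, hAC, mul_div_assoc, div_self hAne,
            mul_one]
        rw [h1, h2, sub_self]
      · intro i
        have he : (1 : ℂ) + (d i - 1) = d i := by ring
        rw [he]
        by_cases hti : t i = 0
        · simp [d, hti]
        · have hti' : 0 < ‖t i‖ := norm_pos_iff.mpr hti
          simp only [d, if_neg hti]
          rw [norm_div, norm_mul, norm_mul, Complex.norm_conj, Complex.norm_real,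
            Complex.norm_real, Real.norm_eq_abs, Real.norm_eq_abs, abs_of_pos hApos, abs_of_pos hti',
            div_lt_one (mul_pos hApos hti')]
          exact mul_lt_mul_of_pos_right hlt hti'
    have heq : ‖S‖ = A := le_antisymm htri hge
    have hSne : S ≠ 0 := by
      intro h0
      rw [h0, norm_zero] at heq
      exact hApos.ne' heq.symm
    refine ⟨starRingEnd ℂ S, by simpa using hSne, fun i => ?_⟩
    have hsum : ∑ i, (starRingEnd ℂ S * t i).re = ‖S‖ * A := by
      have hms : ∑ i, starRingEnd ℂ S * t i = starRingEnd ℂ S * S := by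
        rw [← Finset.mul_sum, ← hS]
      calc ∑ i, (starRingEnd ℂ S * t i).re = (∑ i, starRingEnd ℂ S * t i).re := by
            rw [Complex.re_sum]
        _ = (starRingEnd ℂ S * S).re := by rw [hms]
        _ = ‖S‖ * A := by
            rw [mul_comm, Complex.mul_conj, Complex.ofReal_re, ← Complex.sq_norm, heq]
            ring
    have hle : ∀ k ∈ Finset.univ, (starRingEnd ℂ S * t k).re ≤ ‖S‖ * ‖t k‖ := by
      intro k _
      calc (starRingEnd ℂ S * t k).re ≤ ‖starRingEnd ℂ S * t k‖ := Complex.re_le_norm _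
        _ = ‖S‖ * ‖t k‖ := by rw [norm_mul, Complex.norm_conj]
    have hsum2 : ∑ k, (starRingEnd ℂ S * t k).re = ∑ k, ‖S‖ * ‖t k‖ := by
      rw [hsum, ← Finset.mul_sum, ← hA]
    have heach := (Finset.sum_eq_sum_iff_of_le hle).mp hsum2
    have heq_i : (starRingEnd ℂ S * t i).re = ‖starRingEnd ℂ S * t i‖ := by
      rw [heach i (Finset.mem_univ i), norm_mul, Complex.norm_conj]
    refine ⟨(starRingEnd ℂ S * t i).re, ?_, ?_⟩
    · rw [heq_i]; exact norm_nonneg _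
    · set z := starRingEnd ℂ S * t i with hz
      have him : z.im = 0 := by
        have h1 : ‖z‖ ^ 2 = z.re ^ 2 + z.im ^ 2 := by
          rw [Complex.sq_norm, Complex.normSq_apply]; ring
        rw [← heq_i] at h1
        nlinarith [sq_nonneg z.im]
      apply Complex.ext <;> simp [him]
  · rintro ⟨c, hc, hr⟩ x hx hlt
    choose r hr0 hrc using hr
    have hre : ∀ i, (x i).re < 0 := by
      intro i
      have hi := hlt i
      have h1 : ‖1 + x i‖ ^ 2 < 1 := by nlinarith [norm_nonneg (1 + x i)]
      rw [Complex.sq_norm, Complex.normSq_apply] at h1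
      simp only [Complex.add_re, Complex.add_im, Complex.one_re, Complex.one_im] at h1
      nlinarith [sq_nonneg ((x i).im)]
    have hsum0 : ∑ i, (r i : ℂ) * x i = 0 := by
      calc ∑ i, (r i : ℂ) * x i = ∑ i, c * (t i * x i) := by
            refine Finset.sum_congr rfl fun i _ => ?_
            rw [← hrc i]; ring
        _ = c * ∑ i, t i * x i := by rw [Finset.mul_sum]
        _ = 0 := by rw [hx, mul_zero]
    have hre0 : ∑ i, r i * (x i).re = 0 := by
      have hh := congrArg Complex.re hsum0
      rw [Complex.re_sum] at hh
      simpa [Complex.mul_re, Complex.ofReal_re, Complex.ofReal_im] using hh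
    have hrj : 0 < r j := by
      rcases lt_or_eq_of_le (hr0 j) with h | h
      · exact h
      · exfalso
        have h0 : c * t j = 0 := by rw [hrc j, ← h]; simp
        rcases mul_eq_zero.mp h0 with h' | h'
        · exact hc h'
        · exact hj h'
    have hlt0 : ∑ i, r i * (x i).re < ∑ _i : Fin n, (0:ℝ) :=
      Finset.sum_lt_sum (fun i _ => mul_nonpos_of_nonneg_of_nonpos (hr0 i) (le_of_lt (hre i)))
        ⟨j, Finset.mem_univ j, mul_neg_of_pos_of_neg hrj (hre j)⟩
    rw [Finset.sum_const, smul_zero] at hlt0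
    linarith
end
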